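/- In the group G_n = ⟨P₀, P₁, J | P₀ⁿ = P₁ⁿ = Jⁿ = 1, J central, Jⁱ(P₀ⁱP₁⁻ⁱ)² = 1 for i = 1, ..., ⌊n/2⌋⟩, the elements P₀ⁱP₁⁻ⁱ and P₀ʲP₁⁻ʲ commute for all integers i, j. -/

import Mathlib

open FreeGroup

/-- Free-group generators: `0 ↦ P₀`, `1 ↦ P₁`, `2 ↦ J`. -/
def chshRels (n : ℕ) : Set (FreeGroup (Fin 3)) :=
  {w | w = (FreeGroup.of 0) ^ n ∨ w = (FreeGroup.of 1) ^ n ∨ w = (FreeGroup.of 2) ^ n ∨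
    w = (FreeGroup.of 2) * (FreeGroup.of 0) * (FreeGroup.of 2)⁻¹ * (FreeGroup.of 0)⁻¹ ∨
    w = (FreeGroup.of 2) * (FreeGroup.of 1) * (FreeGroup.of 2)⁻¹ * (FreeGroup.of 1)⁻¹ ∨
    ∃ i : ℕ, 1 ≤ i ∧ i ≤ n / 2 ∧
      w = (FreeGroup.of 2) ^ i * ((FreeGroup.of 0) ^ i * ((FreeGroup.of 1) ^ i)⁻¹) ^ 2}

/-- The group `G_n` of the generalized CHSH game. -/
def Gn (n : ℕ) : Type := PresentedGroup (chshRels n)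

instance (n : ℕ) : Group (Gn n) := by unfold Gn; infer_instance


section key
variable {G : Type*} [Group G] (n : ℕ) (a b c : G)

lemma zpow_mod_aux (x : G) (hx : x ^ n = 1) (hn : 0 < n) (k : ℤ) :
    x ^ k = x ^ (k % (n : ℤ)).toNat := by
  conv_lhs => rw [← Int.emod_add_mul_ediv k (n : ℤ)]
  rw [zpow_add, zpow_mul, zpow_natCast, hx,
    one_zpow, mul_one, ← zpow_natCast, Int.toNat_of_nonneg
      (Int.emod_nonneg k (by exact_mod_cast hn.ne'))]

lemma chsh_key (hn : 2 ≤ n)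
    (ha : a ^ n = 1) (hb : b ^ n = 1) (hc : c ^ n = 1)
    (hca : Commute c a) (hcb : Commute c b)
    (hrel : ∀ i : ℕ, 1 ≤ i → i ≤ n / 2 → c ^ i * (a ^ i * (b ^ i)⁻¹) ^ 2 = 1)
    (i j : ℤ) :
    Commute (a ^ i * b ^ (-i)) (a ^ j * b ^ (-j)) := by
  have hn0 : 0 < n := by omega
  have sqSmall : ∀ m : ℕ, m ≤ n / 2 → (a ^ m * (b ^ m)⁻¹) ^ 2 = (c ^ m)⁻¹ := by
    intro m hm
    rcases Nat.eq_zero_or_pos m with h0 | h1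
    · subst h0; simp
    · exact eq_inv_of_mul_eq_one_right (hrel m h1 hm)
  have sqN : ∀ k : ℕ, k ≤ n → (a ^ k * (b ^ k)⁻¹) ^ 2 = (c ^ k)⁻¹ := by
    intro k hk
    rcases le_or_gt k (n / 2) with h | h
    · exact sqSmall k h
    · set m := n - k with hm
      have hsm := sqSmall m (by omega)
      have hak : a ^ k = (a ^ m)⁻¹ :=
        eq_inv_of_mul_eq_one_left (by rw [← pow_add, show k + m = n by omega, ha])
      have hbk : (b ^ k)⁻¹ = b ^ m :=
        (eq_inv_of_mul_eq_one_left (by rw [← pow_add, show m + k = n by omega, hb])).symm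
      have hck : (c ^ k)⁻¹ = c ^ m :=
        (eq_inv_of_mul_eq_one_left (by rw [← pow_add, show m + k = n by omega, hc])).symm
      rw [hak, hbk, hck, pow_two]
      have h2 : (b ^ m * (a ^ m)⁻¹) * (b ^ m * (a ^ m)⁻¹) = c ^ m := by
        have := hsm
        rw [pow_two] at this
        have h3 := congrArg (·⁻¹) this
        simpa [mul_assoc] using h3
      calc ((a ^ m)⁻¹ * b ^ m) * ((a ^ m)⁻¹ * b ^ m)
          = (a ^ m)⁻¹ * ((b ^ m * (a ^ m)⁻¹) * (b ^ m * (a ^ m)⁻¹)) * a ^ m := by group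
        _ = (a ^ m)⁻¹ * c ^ m * a ^ m := by rw [h2]
        _ = c ^ m := by rw [mul_assoc, (hca.pow_pow m m).eq, inv_mul_cancel_left]
  have sqZ : ∀ k : ℤ, (a ^ k * (b ^ k)⁻¹) * (a ^ k * (b ^ k)⁻¹) = (c ^ k)⁻¹ := by
    intro k
    rw [← pow_two, zpow_mod_aux n a ha hn0 k, zpow_mod_aux n b hb hn0 k,
      zpow_mod_aux n c hc hn0 k]
    refine sqN _ ?_
    have := Int.emod_lt_of_pos k (by exact_mod_cast hn0 : (0:ℤ) < n)
    omega
  have hc_t : ∀ m k : ℤ, Commute (c ^ m) (a ^ k * (b ^ k)⁻¹) := fun m k =>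
    ((hca.zpow_zpow m k).mul_right ((hcb.zpow_zpow m k).inv_right))
  rw [zpow_neg, zpow_neg]
  show _ = _
  symm
  set d := j - i with hd
  have h1 : (a ^ i * (b ^ i)⁻¹) * (a ^ j * (b ^ j)⁻¹)
      = (c ^ i)⁻¹ * (b ^ i * a ^ d * (b ^ j)⁻¹) := by
    calc (a ^ i * (b ^ i)⁻¹) * (a ^ j * (b ^ j)⁻¹)
        = ((a ^ i * (b ^ i)⁻¹) * (a ^ i * (b ^ i)⁻¹))
            * ((a ^ i * (b ^ i)⁻¹)⁻¹ * (a ^ j * (b ^ j)⁻¹)) := by group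
      _ = (c ^ i)⁻¹ * ((a ^ i * (b ^ i)⁻¹)⁻¹ * (a ^ j * (b ^ j)⁻¹)) := by rw [sqZ i]
      _ = (c ^ i)⁻¹ * (b ^ i * a ^ d * (b ^ j)⁻¹) := by rw [hd]; group
  have h3 : (b ^ i * a ^ d * (b ^ j)⁻¹) * (b ^ i * a ^ d * (b ^ j)⁻¹) = (c ^ d)⁻¹ := by
    calc (b ^ i * a ^ d * (b ^ j)⁻¹) * (b ^ i * a ^ d * (b ^ j)⁻¹)
        = b ^ i * ((a ^ d * (b ^ d)⁻¹) * (a ^ d * (b ^ d)⁻¹)) * (b ^ i)⁻¹ := by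
          rw [hd]; group
      _ = b ^ i * (c ^ d)⁻¹ * (b ^ i)⁻¹ := by rw [sqZ d]
      _ = (c ^ d)⁻¹ := by
          rw [(((hcb.symm).zpow_zpow i d).inv_right).eq, mul_inv_cancel_right]
  have key2 : ((a ^ i * (b ^ i)⁻¹) * (a ^ j * (b ^ j)⁻¹))
      * ((a ^ i * (b ^ i)⁻¹) * (a ^ j * (b ^ j)⁻¹)) = (c ^ (i + j))⁻¹ := by
    have hcw : Commute (b ^ i * a ^ d * (b ^ j)⁻¹) ((c ^ i : G))⁻¹ :=
      (((hcb.zpow_zpow i i).mul_right (hca.zpow_zpow i d)).mul_right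
        ((hcb.zpow_zpow i j).inv_right)).symm.inv_right
    rw [h1, hcw.mul_mul_mul_comm, h3]
    rw [hd]; group
  calc (a ^ j * (b ^ j)⁻¹) * (a ^ i * (b ^ i)⁻¹)
      = ((a ^ j * (b ^ j)⁻¹) * (a ^ j * (b ^ j)⁻¹))
          * (((a ^ j * (b ^ j)⁻¹)⁻¹ * ((a ^ i * (b ^ i)⁻¹) * (a ^ i * (b ^ i)⁻¹)))
            * (a ^ i * (b ^ i)⁻¹)⁻¹) := by group
    _ = (c ^ j)⁻¹ * (((a ^ j * (b ^ j)⁻¹)⁻¹ * (c ^ i)⁻¹) * (a ^ i * (b ^ i)⁻¹)⁻¹) := by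
        rw [sqZ i, sqZ j]
    _ = (c ^ j)⁻¹ * ((((c ^ i)⁻¹ * (a ^ j * (b ^ j)⁻¹)⁻¹)) * (a ^ i * (b ^ i)⁻¹)⁻¹) := by
        rw [((hc_t i j).inv_left.inv_right).eq]
    _ = (c ^ (i + j))⁻¹ * ((a ^ i * (b ^ i)⁻¹) * (a ^ j * (b ^ j)⁻¹))⁻¹ := by group
    _ = (((a ^ i * (b ^ i)⁻¹) * (a ^ j * (b ^ j)⁻¹))
          * ((a ^ i * (b ^ i)⁻¹) * (a ^ j * (b ^ j)⁻¹)))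
        * ((a ^ i * (b ^ i)⁻¹) * (a ^ j * (b ^ j)⁻¹))⁻¹ := by rw [key2]
    _ = (a ^ i * (b ^ i)⁻¹) * (a ^ j * (b ^ j)⁻¹) := by group
end key

theorem stmt_5 (n : ℕ) (hn : 2 ≤ n) (i j : ℤ) :
    Commute
      ((PresentedGroup.of (rels := chshRels n) 0 : Gn n) ^ i *
        (PresentedGroup.of (rels := chshRels n) 1 : Gn n) ^ (-i))
      ((PresentedGroup.of (rels := chshRels n) 0 : Gn n) ^ j *
        (PresentedGroup.of (rels := chshRels n) 1 : Gn n) ^ (-j)) := by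
  have relOne : ∀ r ∈ chshRels n, PresentedGroup.mk (chshRels n) r = 1 := fun r hr =>
    (QuotientGroup.eq_one_iff r).mpr (Subgroup.subset_normalClosure hr)
  set A := (PresentedGroup.of (rels := chshRels n) 0 : Gn n) with hA
  set B := (PresentedGroup.of (rels := chshRels n) 1 : Gn n) with hB
  set C := (PresentedGroup.of (rels := chshRels n) 2 : Gn n) with hC
  have ha : A ^ n = 1 := by
    have := relOne _ (Or.inl rfl)
    rw [map_pow] at this
    exact this
  have hb : B ^ n = 1 := by
    have := relOne _ (Or.inr (Or.inl rfl))
    rw [map_pow] at this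
    exact this
  have hc : C ^ n = 1 := by
    have := relOne _ (Or.inr (Or.inr (Or.inl rfl)))
    rw [map_pow] at this
    exact this
  have hca : Commute C A := by
    have := relOne _ (Or.inr (Or.inr (Or.inr (Or.inl rfl))))
    simp only [_root_.map_mul, _root_.map_inv] at this
    exact commutatorElement_eq_one_iff_commute.mp (by rw [commutatorElement_def]; exact this)
  have hcb : Commute C B := by
    have := relOne _ (Or.inr (Or.inr (Or.inr (Or.inr (Or.inl rfl)))))
    simp only [_root_.map_mul, _root_.map_inv] at this
    exact commutatorElement_eq_one_iff_commute.mp (by rw [commutatorElement_def]; exact this)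
  have hrel : ∀ m : ℕ, 1 ≤ m → m ≤ n / 2 → C ^ m * (A ^ m * (B ^ m)⁻¹) ^ 2 = 1 := by
    intro m h1 h2
    have := relOne _ (Or.inr (Or.inr (Or.inr (Or.inr (Or.inr ⟨m, h1, h2, rfl⟩)))))
    simp only [_root_.map_mul, map_pow, _root_.map_inv] at this
    exact this
  exact chsh_key n A B C hn ha hb hc hca hcb hrel i j
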